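/- Let B : [0,1] → ℝ be continuous and nonnegative, and let (μ_n) be a sequence of probability measures on ℝ converging weakly to μ. Then ∫_ℝ B(F_μ(x)) dx ≤ liminf_{n→∞} ∫_ℝ B(F_{μ_n}(x)) dx, where F_ν denotes the CDF of ν. -/

import Mathlib

open MeasureTheory Filter Topology Set

private lemma cdf_mem_Icc (ν : Measure ℝ) [IsProbabilityMeasure ν] (x : ℝ) :
    (ν (Iic x)).toReal ∈ Icc (0 : ℝ) 1 := by
  constructor
  · exact ENNReal.toReal_nonneg
  · have h1 : ν (Iic x) ≤ 1 := prob_le_one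
    have := ENNReal.toReal_mono ENNReal.one_ne_top h1
    simpa using this

private lemma cdf_comp_measurable (B : ℝ → ℝ) (hB_cont : ContinuousOn B (Icc 0 1))
    (ν : Measure ℝ) [IsProbabilityMeasure ν] :
    Measurable (fun x => B ((ν (Iic x)).toReal)) := by
  have hmono : Monotone (fun x => (ν (Iic x)).toReal) := by
    intro a b hab
    exact ENNReal.toReal_mono (measure_ne_top ν _) (measure_mono (Iic_subset_Iic.mpr hab))
  have hF : Measurable fun x => (ν (Iic x)).toReal := hmono.measurable
  have hFs : Measurable fun x => (⟨(ν (Iic x)).toReal, cdf_mem_Icc ν x⟩ : Icc (0:ℝ) 1) :=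
    hF.subtype_mk
  have hBr : Continuous ((Icc (0:ℝ) 1).restrict B) := hB_cont.restrict
  exact hBr.measurable.comp hFs

/-- Lower semicontinuity of the rank-based energy: if `B : [0,1] → [0,∞)` is continuous and
nonnegative and `μₙ → μ` weakly (against bounded continuous functions), then
`∫ B(F_μ(x)) dx ≤ liminf ∫ B(F_{μₙ}(x)) dx`. -/
theorem stmt_18 (B : ℝ → ℝ) (hB_cont : ContinuousOn B (Icc 0 1))
    (hB_nonneg : ∀ u ∈ Icc (0 : ℝ) 1, 0 ≤ B u)
    (μ : Measure ℝ) (μs : ℕ → Measure ℝ)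
    [IsProbabilityMeasure μ] [∀ n, IsProbabilityMeasure (μs n)]
    (hweak : ∀ f : BoundedContinuousFunction ℝ ℝ,
      Tendsto (fun n => ∫ x, f x ∂(μs n)) atTop (𝓝 (∫ x, f x ∂μ))) :
    ∫⁻ x, ENNReal.ofReal (B ((μ (Iic x)).toReal))
      ≤ Filter.liminf (fun n => ∫⁻ x, ENNReal.ofReal (B (((μs n) (Iic x)).toReal))) atTop := by
  -- package as ProbabilityMeasure
  set μ' : ProbabilityMeasure ℝ := ⟨μ, inferInstance⟩ with hμ'
  set μs' : ℕ → ProbabilityMeasure ℝ := fun n => ⟨μs n, inferInstance⟩ with hμs'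
  have hlim : Tendsto μs' atTop (𝓝 μ') := by
    rw [ProbabilityMeasure.tendsto_iff_forall_integral_tendsto]
    exact hweak
  -- atoms of μ form a countable set
  have hcount : Set.Countable {x : ℝ | 0 < μ {x}} := by
    apply Measure.countable_meas_pos_of_disjoint_iUnion₀ (μ := μ)
      (As := fun x : ℝ => {x})
    · exact fun x => (measurableSet_singleton x).nullMeasurableSet
    · intro a b hab
      exact (disjoint_singleton.mpr hab).aedisjoint
  have hnull : (volume : Measure ℝ) {x : ℝ | 0 < μ {x}} = 0 :=
    hcount.measure_zero _
  -- a.e. pointwise convergence of the integrands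
  have hae : ∀ᵐ x : ℝ, Tendsto (fun n => ENNReal.ofReal (B (((μs n) (Iic x)).toReal))) atTop
      (𝓝 (ENNReal.ofReal (B ((μ (Iic x)).toReal)))) := by
    rw [ae_iff]
    apply measure_mono_null _ hnull
    intro x hx
    simp only [mem_setOf_eq, mem_compl_iff] at *
    by_contra hxa
    apply hx
    push_neg at hxa
    have hfr : (μ' : Measure ℝ) (frontier (Iic x)) = 0 := by
      rw [frontier_Iic]
      simpa [hμ'] using le_antisymm hxa zero_le
    have hkey := ProbabilityMeasure.tendsto_measure_of_null_frontier_of_tendsto' hlim hfr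
    have hkeyR : Tendsto (fun n => ((μs n) (Iic x)).toReal) atTop
        (𝓝 ((μ (Iic x)).toReal)) := by
      have := (ENNReal.tendsto_toReal (measure_ne_top (μ' : Measure ℝ) (Iic x))).comp hkey
      simpa [hμ', hμs', Function.comp_def] using this
    have hBt : Tendsto (fun n => B (((μs n) (Iic x)).toReal)) atTop
        (𝓝 (B ((μ (Iic x)).toReal))) := by
      have hcw : ContinuousWithinAt B (Icc (0:ℝ) 1) ((μ (Iic x)).toReal) :=
        hB_cont _ (cdf_mem_Icc μ x)
      apply hcw.tendsto.comp
      rw [tendsto_nhdsWithin_iff]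
      exact ⟨hkeyR, Eventually.of_forall fun n => cdf_mem_Icc (μs n) x⟩
    exact (ENNReal.continuous_ofReal.tendsto _).comp hBt
  -- rewrite the LHS as the lintegral of the liminf
  have hcongr : ∫⁻ x, ENNReal.ofReal (B ((μ (Iic x)).toReal))
      = ∫⁻ x, Filter.liminf (fun n => ENNReal.ofReal (B (((μs n) (Iic x)).toReal))) atTop := by
    apply lintegral_congr_ae
    filter_upwards [hae] with x hx
    exact (hx.liminf_eq).symm
  rw [hcongr]
  exact lintegral_liminf_le fun n =>
    ENNReal.measurable_ofReal.comp (cdf_comp_measurable B hB_cont (μs n))
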